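/- Let q be a prime power and t ≥ 1. Let a_1, ..., a_r ∈ F_{q^t}^* be pairwise non-conjugate, and for each i let β_{i,1}, ..., β_{i,l_i} ∈ F_{q^t}^* be such that the elements ω_{i,j} = β_{i,j}^{q-1} a_i are pairwise distinct within each class; optionally let Ω also contain the element 0. Let Ω be the set of all these elements (so they are pairwise distinct), and n = |Ω|. Then the n×n skew Vandermonde matrix V_n(Ω), with entry N_r(ω) in row r (0 ≤ r ≤ n-1) and the column indexed by ω ∈ Ω, is invertible if and only if for each i the set {β_{i,1}, ..., β_{i,l_i}} is linearly independent over F_q. -/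

import Mathlib

def skewN (q : ℕ) {F : Type*} [Field F] : ℕ → F → F
  | 0, _ => 1
  | i + 1, a => (skewN q i a) ^ q * a

section SkewNLemmas

variable {F : Type*} [Field F]

lemma skewN_zero (q : ℕ) (a : F) : skewN q 0 a = 1 := rfl

lemma skewN_succ (q i : ℕ) (a : F) : skewN q (i + 1) a = (skewN q i a) ^ q * a := rfl

lemma skewN_succ' (q i : ℕ) (a : F) :
    skewN q (i + 1) a = skewN q i a * a ^ q ^ i := by
  induction i with
  | zero => simp [skewN]
  | succ i ih =>
    have h := ih
    rw [skewN_succ] at h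
    rw [skewN_succ, ih, mul_pow, ← pow_mul, ← pow_succ]
    linear_combination a ^ q ^ (i + 1) * h

lemma skewN_prod (q i : ℕ) (a : F) : skewN q i a = ∏ j ∈ Finset.range i, a ^ q ^ j := by
  induction i with
  | zero => simp [skewN]
  | succ i ih => rw [skewN_succ', ih, Finset.prod_range_succ]

lemma skewN_zero_arg (q : ℕ) (i : ℕ) (hi : i ≠ 0) : skewN q i (0 : F) = 0 := by
  obtain ⟨j, rfl⟩ := Nat.exists_eq_succ_of_ne_zero hi
  rw [skewN_succ, mul_zero]

lemma skewN_conj (q : ℕ) (hq : 1 ≤ q) (i : ℕ) (s a : F) :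
    skewN q i (s ^ (q - 1) * a) = s ^ (q ^ i - 1) * skewN q i a := by
  induction i with
  | zero => simp [skewN]
  | succ i ih =>
    have h1 : 1 ≤ q ^ i := Nat.one_le_pow _ _ (by omega)
    have h2 : q ≤ q ^ (i + 1) := Nat.le_self_pow (by omega) q
    have h3 : (q ^ i - 1) * q + (q - 1) = q ^ (i + 1) - 1 := by
      rw [Nat.sub_mul, ← pow_succ]; omega
    rw [skewN_succ, ih, skewN_succ, mul_pow, ← pow_mul, ← h3, pow_add]
    ring

end SkewNLemmas

section Key

variable {F : Type*} [Field F]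

lemma sum_pow_q [Fintype F] (p k q : ℕ) (hq : q = p ^ k) [ExpChar F p]
    {α : Type*} (s : Finset α) (f : α → F) (ρ : ℕ) :
    (∑ x ∈ s, f x) ^ q ^ ρ = ∑ x ∈ s, (f x) ^ q ^ ρ := by
  subst hq
  rw [← pow_mul p k ρ]
  simp_rw [← iterateFrobenius_def (R := F) (p := p) (n := k * ρ)]
  exact map_sum (iterateFrobenius F p (k * ρ)) f s

lemma fix_pow_q (q ρ : ℕ) {x : F} (hx : x ^ q = x) : x ^ q ^ ρ = x := by
  induction ρ with
  | zero => simp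
  | succ ρ ih => rw [pow_succ, pow_mul, ih, hx]

lemma key (p k q : ℕ) (hp : p.Prime) (hk : 1 ≤ k) (hqpk : q = p ^ k)
    [Fintype F] [DecidableEq F] [ExpChar F p] (d : ℕ) :
    ∀ c : ℕ → F, (∀ ρ, d < ρ → c ρ = 0) → (∃ ρ, c ρ ≠ 0) →
      ∀ (m : ℕ) (a : Fin m → F), (∀ i, a i ≠ 0) →
      (∀ i j : Fin m, i ≠ j → ∀ β : F, β ≠ 0 → a j ≠ β ^ (q - 1) * a i) →
      (∏ i, (Finset.univ.filter (fun u : F =>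
          ∑ ρ ∈ Finset.range (d + 1), c ρ * skewN q ρ (a i) * u ^ q ^ ρ = 0)).card)
        * (if c 0 = 0 then q else 1) ≤ q ^ d := by
  have hq2 : 2 ≤ q := by
    rw [hqpk]
    calc 2 ≤ p := hp.two_le
    _ ≤ p ^ k := Nat.le_self_pow (by omega) p
  have hpow : ∀ (j : ℕ) (x : F), x ^ q ^ j = iterateFrobenius F p (k * j) x := by
    intro j x; rw [iterateFrobenius_def, hqpk, ← pow_mul]
  have hsub : ∀ (j : ℕ) (x y : F), (x - y) ^ q ^ j = x ^ q ^ j - y ^ q ^ j := by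
    intro j x y; rw [hpow, hpow, hpow, map_sub]
  have hqinj : Function.Injective (fun x : F => x ^ q) := by
    intro x y hxy
    have h1 : x ^ q ^ 1 = y ^ q ^ 1 := by simpa [pow_one] using hxy
    rw [hpow, hpow] at h1
    exact (iterateFrobenius F p (k * 1)).injective h1
  induction d with
  | zero =>
    rintro c hsupp ⟨ρ0, hρ0⟩ m a ha hconj
    have hc0 : c 0 ≠ 0 := by
      rcases Nat.eq_zero_or_pos ρ0 with h | h
      · rwa [h] at hρ0
      · exact absurd (hsupp ρ0 h) hρ0
    rw [if_neg hc0, mul_one]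
    have hfilt : ∀ i : Fin m, (Finset.univ.filter (fun u : F =>
        ∑ ρ ∈ Finset.range 1, c ρ * skewN q ρ (a i) * u ^ q ^ ρ = 0)) = {0} := by
      intro i
      ext u
      simp [Finset.sum_range_one, skewN_zero, hc0]
    simp only [hfilt, Finset.card_singleton, Finset.prod_const_one, pow_zero, le_refl]
  | succ e ih =>
    rintro c hsupp hcne m a ha hconj
    by_cases hc0 : c 0 = 0
    · -- shift down by one power of X
      obtain ⟨ψ, hψ1, hψ2⟩ : ∃ ψ : F → F, (∀ x, (ψ x) ^ q = x) ∧ (∀ x, ψ (x ^ q) = x) := by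
        have hbij : Function.Bijective (fun x : F => x ^ q) :=
          Finite.injective_iff_bijective.mp hqinj
        exact ⟨(Equiv.ofBijective _ hbij).symm,
          fun x => (Equiv.ofBijective _ hbij).apply_symm_apply x,
          fun x => (Equiv.ofBijective _ hbij).symm_apply_apply x⟩
      set c' : ℕ → F := fun ρ => ψ (c (ρ + 1)) with hc'
      have hψ0 : ψ 0 = 0 := by
        have h := hψ2 0
        rwa [zero_pow (by omega : q ≠ 0)] at h
      have hsupp' : ∀ ρ, e < ρ → c' ρ = 0 := by
        intro ρ hρ
        rw [hc']
        simp only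
        rw [hsupp (ρ + 1) (by omega), hψ0]
      have hcne' : ∃ ρ, c' ρ ≠ 0 := by
        obtain ⟨ρ0, h0⟩ := hcne
        have hρ0 : ρ0 ≠ 0 := fun h => h0 (h ▸ hc0)
        refine ⟨ρ0 - 1, fun h => h0 ?_⟩
        have h2 := congrArg (fun y : F => y ^ q) h
        rw [hψ1, zero_pow (by omega : q ≠ 0)] at h2
        rwa [show ρ0 - 1 + 1 = ρ0 by omega] at h2
      have hker : ∀ (i : Fin m) (u : F),
          (∑ ρ ∈ Finset.range (e + 1 + 1), c ρ * skewN q ρ (a i) * u ^ q ^ ρ = 0)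
          ↔ (∑ ρ ∈ Finset.range (e + 1), c' ρ * skewN q ρ (a i) * u ^ q ^ ρ = 0) := by
        intro i u
        have hLHS : ∑ ρ ∈ Finset.range (e + 1 + 1), c ρ * skewN q ρ (a i) * u ^ q ^ ρ
            = (∑ ρ ∈ Finset.range (e + 1), c' ρ * skewN q ρ (a i) * u ^ q ^ ρ) ^ q * a i := by
          rw [Finset.sum_range_succ']
          rw [hc0, zero_mul, zero_mul, add_zero]
          have hterm : ∀ ρ, c (ρ + 1) * skewN q (ρ + 1) (a i) * u ^ q ^ (ρ + 1)
              = (c' ρ * skewN q ρ (a i) * u ^ q ^ ρ) ^ q * a i := by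
            intro ρ
            rw [mul_pow, mul_pow, hψ1, ← pow_mul, ← pow_succ, skewN_succ]
            ring
          rw [Finset.sum_congr rfl fun ρ _ => hterm ρ]
          have hq1 : ∀ y : F, y ^ q = y ^ q ^ 1 := fun y => by rw [pow_one]
          rw [← Finset.sum_mul]
          congr 1
          rw [hq1, sum_pow_q p k q hqpk]
          exact Finset.sum_congr rfl fun ρ _ => by rw [← hq1]
        rw [hLHS]
        constructor
        · intro h
          rcases mul_eq_zero.mp h with h | h
          · exact pow_eq_zero_iff (by omega : q ≠ 0) |>.mp h
          · exact absurd h (ha i)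
        · intro h
          rw [h, zero_pow (by omega : q ≠ 0), zero_mul]
      have hfilt : ∀ i : Fin m,
          Finset.univ.filter (fun u : F =>
            ∑ ρ ∈ Finset.range (e + 1 + 1), c ρ * skewN q ρ (a i) * u ^ q ^ ρ = 0)
          = Finset.univ.filter (fun u : F =>
            ∑ ρ ∈ Finset.range (e + 1), c' ρ * skewN q ρ (a i) * u ^ q ^ ρ = 0) := by
        intro i
        ext u
        simp only [Finset.mem_filter, Finset.mem_univ, true_and]
        exact hker i u
      rw [if_pos hc0]
      have hih := ih c' hsupp' hcne' m a ha hconj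
      have h1 : (∏ i, (Finset.univ.filter (fun u : F =>
          ∑ ρ ∈ Finset.range (e + 1), c' ρ * skewN q ρ (a i) * u ^ q ^ ρ = 0)).card) ≤ q ^ e := by
        refine le_trans ?_ hih
        exact Nat.le_mul_of_pos_right _ (by split <;> omega)
      calc (∏ i, (Finset.univ.filter (fun u : F =>
            ∑ ρ ∈ Finset.range (e + 1 + 1), c ρ * skewN q ρ (a i) * u ^ q ^ ρ = 0)).card) * q
          = (∏ i, (Finset.univ.filter (fun u : F =>
            ∑ ρ ∈ Finset.range (e + 1), c' ρ * skewN q ρ (a i) * u ^ q ^ ρ = 0)).card) * q := by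
            rw [Finset.prod_congr rfl fun i _ => by rw [hfilt i]]
        _ ≤ q ^ e * q := Nat.mul_le_mul_right q h1
        _ = q ^ (e + 1) := (pow_succ q e).symm
    · -- c 0 ≠ 0
      rw [if_neg hc0, mul_one]
      by_cases hroot : ∃ (i0 : Fin m) (s : F), s ≠ 0 ∧
          ∑ ρ ∈ Finset.range (e + 1 + 1), c ρ * skewN q ρ (a i0) * s ^ q ^ ρ = 0
      swap
      · -- no nonzero roots: every kernel is {0}
        push_neg at hroot
        have hfilt : ∀ i : Fin m, (Finset.univ.filter (fun u : F =>
            ∑ ρ ∈ Finset.range (e + 1 + 1), c ρ * skewN q ρ (a i) * u ^ q ^ ρ = 0)).card ≤ 1 := by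
          intro i
          refine Finset.card_le_one.mpr fun u hu v hv => ?_
          simp only [Finset.mem_filter, Finset.mem_univ, true_and] at hu hv
          by_contra hne
          rcases eq_or_ne u 0 with rfl | hu0
          · rcases eq_or_ne v 0 with rfl | hv0
            · exact hne rfl
            · exact hroot i v hv0 hv
          · exact hroot i u hu0 hu
        calc (∏ i, (Finset.univ.filter (fun u : F =>
              ∑ ρ ∈ Finset.range (e + 1 + 1), c ρ * skewN q ρ (a i) * u ^ q ^ ρ = 0)).card)
            ≤ ∏ _i : Fin m, 1 := Finset.prod_le_prod' fun i _ => hfilt i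
          _ = 1 := Finset.prod_const_one
          _ ≤ q ^ (e + 1) := Nat.one_le_pow _ _ (by omega)
      obtain ⟨i0, s, hs0, hsroot⟩ := hroot
      set A := a i0 with hA
      have hAne : A ≠ 0 := ha i0
      set ω : F := s ^ (q - 1) * A with hω
      have hωne : ω ≠ 0 := mul_ne_zero (pow_ne_zero _ hs0) hAne
      -- Step 1 : the skew evaluation of c at ω vanishes
      have hfω : ∑ ρ ∈ Finset.range (e + 1 + 1), c ρ * skewN q ρ ω = 0 := by
        have h1 : (∑ ρ ∈ Finset.range (e + 1 + 1), c ρ * skewN q ρ ω) * s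
            = ∑ ρ ∈ Finset.range (e + 1 + 1), c ρ * skewN q ρ A * s ^ q ^ ρ := by
          rw [Finset.sum_mul]
          refine Finset.sum_congr rfl fun ρ _ => ?_
          rw [hω, skewN_conj q (by omega) ρ s A]
          have h2 : s ^ (q ^ ρ - 1) * s = s ^ q ^ ρ := by
            rw [← pow_succ]
            congr 1
            have := Nat.one_le_pow ρ q (by omega : 0 < q)
            omega
          calc c ρ * (s ^ (q ^ ρ - 1) * skewN q ρ A) * s
              = c ρ * skewN q ρ A * (s ^ (q ^ ρ - 1) * s) := by ring
            _ = c ρ * skewN q ρ A * s ^ q ^ ρ := by rw [h2]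
        have h3 : (∑ ρ ∈ Finset.range (e + 1 + 1), c ρ * skewN q ρ ω) * s = 0 := by
          rw [h1]; exact hsroot
        exact (mul_eq_zero.mp h3).resolve_right hs0
      -- the quotient coefficients b
      set b : ℕ → F := fun ρ =>
        ∑ j ∈ Finset.Ico (ρ + 1) (e + 2), c j * ∏ x ∈ Finset.Ico (ρ + 1) j, ω ^ q ^ x with hbdef
      have hb_top : ∀ ρ, e + 1 ≤ ρ → b ρ = 0 := by
        intro ρ hρ
        rw [hbdef]
        simp only
        rw [Finset.Ico_eq_empty (by omega), Finset.sum_empty]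
      have hb_rec : ∀ ρ, ρ < e + 1 → b ρ = c (ρ + 1) + b (ρ + 1) * ω ^ q ^ (ρ + 1) := by
        intro ρ hρ
        rw [hbdef]
        simp only
        rw [Finset.sum_eq_sum_Ico_succ_bot (by omega : ρ + 1 < e + 2)]
        rw [Finset.Ico_self, Finset.prod_empty, mul_one]
        congr 1
        rw [Finset.sum_mul]
        refine Finset.sum_congr rfl fun j hj => ?_
        have hj' : ρ + 1 + 1 ≤ j := (Finset.mem_Ico.mp hj).1
        rw [Finset.prod_eq_prod_Ico_succ_bot (by omega : ρ + 1 < j)]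
        ring
      have hb0 : c 0 + b 0 * ω = 0 := by
        have h2 : b 0 * ω = ∑ j ∈ Finset.Ico 1 (e + 2), c j * skewN q j ω := by
          rw [hbdef]
          simp only
          rw [Finset.sum_mul]
          refine Finset.sum_congr rfl fun j hj => ?_
          have hj1 : 1 ≤ j := (Finset.mem_Ico.mp hj).1
          rw [skewN_prod, Finset.range_eq_Ico,
            Finset.prod_eq_prod_Ico_succ_bot (by omega : 0 < j), pow_zero, pow_one]
          ring
        rw [h2]
        rw [Finset.range_eq_Ico, Finset.sum_eq_sum_Ico_succ_bot (by omega : 0 < e + 1 + 1)] at hfω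
        rw [skewN_zero, mul_one] at hfω
        convert hfω using 3
      -- the division identity
      have hstar : ∀ A' u : F,
          ∑ ρ ∈ Finset.range (e + 1 + 1), c ρ * skewN q ρ A' * u ^ q ^ ρ
          = ∑ ρ ∈ Finset.range (e + 1), b ρ * skewN q ρ A' * (A' * u ^ q - ω * u) ^ q ^ ρ := by
        intro A' u
        have hrhs : ∀ ρ, b ρ * skewN q ρ A' * (A' * u ^ q - ω * u) ^ q ^ ρ
            = b ρ * skewN q (ρ + 1) A' * u ^ q ^ (ρ + 1)
              - b ρ * ω ^ q ^ ρ * skewN q ρ A' * u ^ q ^ ρ := by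
          intro ρ
          rw [hsub, mul_pow, mul_pow, ← pow_mul, skewN_succ' q ρ A']
          have hqq : q * q ^ ρ = q ^ (ρ + 1) := by rw [pow_succ]; ring
          rw [hqq]
          ring
        have hlhs : ∀ ρ, ρ ∈ Finset.range (e + 1) →
            c (ρ + 1) * skewN q (ρ + 1) A' * u ^ q ^ (ρ + 1)
            = (b ρ * skewN q (ρ + 1) A' * u ^ q ^ (ρ + 1)
                - b ρ * ω ^ q ^ ρ * skewN q ρ A' * u ^ q ^ ρ)
              + (b ρ * ω ^ q ^ ρ * skewN q ρ A' * u ^ q ^ ρ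
                - b (ρ + 1) * ω ^ q ^ (ρ + 1) * skewN q (ρ + 1) A' * u ^ q ^ (ρ + 1)) := by
          intro ρ hρ
          have hc : c (ρ + 1) = b ρ - b (ρ + 1) * ω ^ q ^ (ρ + 1) := by
            have h := hb_rec ρ (Finset.mem_range.mp hρ)
            linear_combination -h
          rw [hc]
          ring
        have htel : ∑ ρ ∈ Finset.range (e + 1),
            (b ρ * ω ^ q ^ ρ * skewN q ρ A' * u ^ q ^ ρ
              - b (ρ + 1) * ω ^ q ^ (ρ + 1) * skewN q (ρ + 1) A' * u ^ q ^ (ρ + 1))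
            = b 0 * ω ^ q ^ 0 * skewN q 0 A' * u ^ q ^ 0
              - b (e + 1) * ω ^ q ^ (e + 1) * skewN q (e + 1) A' * u ^ q ^ (e + 1) :=
          Finset.sum_range_sub' (fun ρ => b ρ * ω ^ q ^ ρ * skewN q ρ A' * u ^ q ^ ρ) (e + 1)
        calc ∑ ρ ∈ Finset.range (e + 1 + 1), c ρ * skewN q ρ A' * u ^ q ^ ρ
            = (∑ ρ ∈ Finset.range (e + 1), c (ρ + 1) * skewN q (ρ + 1) A' * u ^ q ^ (ρ + 1))
              + c 0 * skewN q 0 A' * u ^ q ^ 0 := Finset.sum_range_succ' _ _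
          _ = (∑ ρ ∈ Finset.range (e + 1),
                ((b ρ * skewN q (ρ + 1) A' * u ^ q ^ (ρ + 1)
                  - b ρ * ω ^ q ^ ρ * skewN q ρ A' * u ^ q ^ ρ)
                + (b ρ * ω ^ q ^ ρ * skewN q ρ A' * u ^ q ^ ρ
                  - b (ρ + 1) * ω ^ q ^ (ρ + 1) * skewN q (ρ + 1) A' * u ^ q ^ (ρ + 1))))
              + c 0 * skewN q 0 A' * u ^ q ^ 0 := by rw [Finset.sum_congr rfl hlhs]
          _ = (∑ ρ ∈ Finset.range (e + 1),
                (b ρ * skewN q (ρ + 1) A' * u ^ q ^ (ρ + 1)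
                  - b ρ * ω ^ q ^ ρ * skewN q ρ A' * u ^ q ^ ρ))
              + ((∑ ρ ∈ Finset.range (e + 1),
                (b ρ * ω ^ q ^ ρ * skewN q ρ A' * u ^ q ^ ρ
                  - b (ρ + 1) * ω ^ q ^ (ρ + 1) * skewN q (ρ + 1) A' * u ^ q ^ (ρ + 1)))
              + c 0 * skewN q 0 A' * u ^ q ^ 0) := by
                rw [Finset.sum_add_distrib]; ring
          _ = ∑ ρ ∈ Finset.range (e + 1),
                (b ρ * skewN q (ρ + 1) A' * u ^ q ^ (ρ + 1)
                  - b ρ * ω ^ q ^ ρ * skewN q ρ A' * u ^ q ^ ρ) := by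
                rw [htel, hb_top (e + 1) le_rfl]
                have : b 0 * ω ^ q ^ 0 * skewN q 0 A' * u ^ q ^ 0
                    + c 0 * skewN q 0 A' * u ^ q ^ 0 = 0 := by
                  rw [skewN_zero, pow_zero, pow_one, pow_one]
                  linear_combination u * hb0
                linear_combination this
          _ = ∑ ρ ∈ Finset.range (e + 1), b ρ * skewN q ρ A' * (A' * u ^ q - ω * u) ^ q ^ ρ := by
                rw [Finset.sum_congr rfl fun ρ _ => (hrhs ρ).symm]
      -- the roots of w^q = s^(q-1) w number at most q
      have hRf : (Finset.univ.filter (fun w : F => w ^ q = s ^ (q - 1) * w)).card ≤ q := by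
        set P : Polynomial F := Polynomial.X ^ q - Polynomial.C (s ^ (q - 1)) * Polynomial.X
          with hP
        have hPne : P ≠ 0 := by
          intro h
          have h1 : P.coeff q = 1 := by
            rw [hP, Polynomial.coeff_sub, Polynomial.coeff_X_pow, if_pos rfl,
              Polynomial.coeff_C_mul, Polynomial.coeff_X, if_neg (by omega : ¬1 = q)]
            ring
          rw [h] at h1
          simp at h1
        have hdeg : P.natDegree ≤ q := by
          refine le_trans (Polynomial.natDegree_sub_le _ _) ?_
          rw [Polynomial.natDegree_X_pow]
          refine max_le le_rfl (le_trans (Polynomial.natDegree_C_mul_le _ _) ?_)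
          rw [Polynomial.natDegree_X]; omega
        have hsubset : (Finset.univ.filter (fun w : F => w ^ q = s ^ (q - 1) * w))
            ⊆ P.roots.toFinset := by
          intro w hw
          simp only [Finset.mem_filter, Finset.mem_univ, true_and] at hw
          rw [Multiset.mem_toFinset, Polynomial.mem_roots hPne]
          rw [hP]
          simp [Polynomial.IsRoot, sub_eq_zero, hw]
        calc (Finset.univ.filter (fun w : F => w ^ q = s ^ (q - 1) * w)).card
            ≤ P.roots.toFinset.card := Finset.card_le_card hsubset
          _ ≤ Multiset.card P.roots := P.roots.toFinset_card_le
          _ ≤ P.natDegree := P.card_roots'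
          _ ≤ q := hdeg
      -- per-class cardinality bounds
      have hcard : ∀ i : Fin m,
          (Finset.univ.filter (fun u : F =>
            ∑ ρ ∈ Finset.range (e + 1 + 1), c ρ * skewN q ρ (a i) * u ^ q ^ ρ = 0)).card
          ≤ (if i = i0 then q else 1) *
            (Finset.univ.filter (fun u : F =>
            ∑ ρ ∈ Finset.range (e + 1), b ρ * skewN q ρ (a i) * u ^ q ^ ρ = 0)).card := by
        intro i
        have hmaps : ∀ u ∈ Finset.univ.filter (fun u : F =>
            ∑ ρ ∈ Finset.range (e + 1 + 1), c ρ * skewN q ρ (a i) * u ^ q ^ ρ = 0),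
            (a i * u ^ q - ω * u) ∈ Finset.univ.filter (fun v : F =>
            ∑ ρ ∈ Finset.range (e + 1), b ρ * skewN q ρ (a i) * v ^ q ^ ρ = 0) := by
          intro u hu
          simp only [Finset.mem_filter, Finset.mem_univ, true_and] at hu ⊢
          rw [← hstar (a i) u]
          exact hu
        by_cases hii : i = i0
        · subst hii
          rw [if_pos rfl]
          refine Finset.card_le_mul_card_image_of_maps_to hmaps q ?_
          intro y _
          rcases Finset.eq_empty_or_nonempty ((Finset.univ.filter (fun u : F =>
              ∑ ρ ∈ Finset.range (e + 1 + 1), c ρ * skewN q ρ (a i) * u ^ q ^ ρ = 0)).filter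
              (fun u => a i * u ^ q - ω * u = y)) with hemp | hne
          · rw [hemp, Finset.card_empty]; omega
          obtain ⟨u0, hu0⟩ := hne
          have hrw := Finset.mem_filter.mp hu0
          have hu0fib : a i * u0 ^ q - ω * u0 = y := hrw.2
          calc ((Finset.univ.filter (fun u : F =>
                ∑ ρ ∈ Finset.range (e + 1 + 1), c ρ * skewN q ρ (a i) * u ^ q ^ ρ = 0)).filter
                (fun u => a i * u ^ q - ω * u = y)).card
              ≤ (Finset.univ.filter (fun w : F => w ^ q = s ^ (q - 1) * w)).card := by
                refine Finset.card_le_card_of_injOn (fun u => u - u0) ?_ ?_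
                · intro u hu
                  have hufib : a i * u ^ q - ω * u = y := (Finset.mem_filter.mp hu).2
                  simp only [Finset.mem_coe, Finset.mem_filter, Finset.mem_univ, true_and]
                  have h1 : a i * (u - u0) ^ q = ω * (u - u0) := by
                    have hq1 : (u - u0) ^ q = u ^ q - u0 ^ q := by
                      have h := hsub 1 u u0; rwa [pow_one] at h
                    rw [hq1]
                    linear_combination hufib - hu0fib
                  have h2 : a i * ((u - u0) ^ q) = a i * (s ^ (q - 1) * (u - u0)) := by
                    rw [h1, hω, hA]; ring
                  exact mul_left_cancel₀ hAne h2
                · intro x _ y' _ hxy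
                  have : x - u0 = y' - u0 := hxy
                  exact sub_left_inj.mp this
            _ ≤ q := hRf
        · rw [if_neg hii, one_mul]
          refine Finset.card_le_card_of_injOn (fun u => a i * u ^ q - ω * u) hmaps ?_
          intro u hu v hv huv
          by_contra hne
          have hw : u - v ≠ 0 := sub_ne_zero.mpr hne
          have h1 : a i * (u - v) ^ q = ω * (u - v) := by
            have hq1 : (u - v) ^ q = u ^ q - v ^ q := by
              have h := hsub 1 u v; rwa [pow_one] at h
            rw [hq1]
            have huv' : a i * u ^ q - ω * u = a i * v ^ q - ω * v := huv
            linear_combination huv'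
          have hq1q : (u - v) ^ (q - 1) * (u - v) = (u - v) ^ q := by
            rw [← pow_succ]
            congr 1
            omega
          have h2 : (a i * (u - v) ^ (q - 1)) * (u - v) = ω * (u - v) := by
            rw [mul_assoc, hq1q, h1]
          have h3 : a i * (u - v) ^ (q - 1) = ω := mul_right_cancel₀ hw h2
          have hwq : (u - v) ^ (q - 1) ≠ 0 := pow_ne_zero _ hw
          have h5 : a i = ω / (u - v) ^ (q - 1) := (eq_div_iff hwq).mpr h3
          have h4 : a i = (s * (u - v)⁻¹) ^ (q - 1) * a i0 := by
            rw [h5, hω, hA, mul_pow, inv_pow]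
            ring
          exact hconj i0 i (fun hh => hii hh.symm) (s * (u - v)⁻¹)
            (mul_ne_zero hs0 (inv_ne_zero hw)) h4
      -- apply the induction hypothesis to b
      have hb0ne : b 0 ≠ 0 := by
        intro h
        rw [h, zero_mul, add_zero] at hb0
        exact hc0 hb0
      have hih := ih b (fun ρ h => hb_top ρ (by omega)) ⟨0, hb0ne⟩ m a ha hconj
      rw [if_neg hb0ne, mul_one] at hih
      calc (∏ i, (Finset.univ.filter (fun u : F =>
            ∑ ρ ∈ Finset.range (e + 1 + 1), c ρ * skewN q ρ (a i) * u ^ q ^ ρ = 0)).card)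
          ≤ ∏ i, ((if i = i0 then q else 1) *
            (Finset.univ.filter (fun u : F =>
            ∑ ρ ∈ Finset.range (e + 1), b ρ * skewN q ρ (a i) * u ^ q ^ ρ = 0)).card) :=
            Finset.prod_le_prod' fun i _ => hcard i
        _ = (∏ i, (if i = i0 then q else 1)) * ∏ i, (Finset.univ.filter (fun u : F =>
            ∑ ρ ∈ Finset.range (e + 1), b ρ * skewN q ρ (a i) * u ^ q ^ ρ = 0)).card :=
            Finset.prod_mul_distrib
        _ = q * ∏ i, (Finset.univ.filter (fun u : F =>
            ∑ ρ ∈ Finset.range (e + 1), b ρ * skewN q ρ (a i) * u ^ q ^ ρ = 0)).card := by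
            rw [Finset.prod_ite_eq' Finset.univ i0 (fun _ => q), if_pos (Finset.mem_univ i0)]
        _ ≤ q * q ^ e := Nat.mul_le_mul_left q hih
        _ = q ^ (e + 1) := by rw [pow_succ]; ring

end Key


lemma keyB {F : Type*} [Field F] [Fintype F] [DecidableEq F] (p k q t : ℕ)
    (hp : Nat.Prime p) (hk : 1 ≤ k) (hqpk : q = p ^ k) [ExpChar F p]
    (hF : Fintype.card F = q ^ t) (ht : 1 ≤ t)
    (r : ℕ) (a : Fin r → F) (ha : ∀ i, a i ≠ 0)
    (hconj : ∀ i j : Fin r, i ≠ j → ∀ β : F, β ≠ 0 → a j ≠ β ^ (q - 1) * a i)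
    (l : Fin r → ℕ) (B : ∀ i : Fin r, Fin (l i) → F)
    (hindep : ∀ i : Fin r, ∀ c : Fin (l i) → F, (∀ j, (c j) ^ q = c j) →
      ∑ j, c j * B i j = 0 → ∀ j, c j = 0)
    (n : ℕ) (hn1 : 1 ≤ n) (zz : ℕ) (hzz : zz ≤ 1)
    (hcount : n = (∑ i, l i) + zz)
    (c : ℕ → F) (hcne : ∃ ρ, c ρ ≠ 0) (hsupp : ∀ ρ, n - 1 < ρ → c ρ = 0)
    (hc0 : 1 ≤ zz → c 0 = 0)
    (hroots : ∀ (i : Fin r) (j : Fin (l i)),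
      (∑ ρ ∈ Finset.range n, c ρ * skewN q ρ ((B i j) ^ (q - 1) * a i)) = 0) :
    False := by
  have hq2 : 2 ≤ q := by
    rw [hqpk]
    calc 2 ≤ p := hp.two_le
    _ ≤ p ^ k := Nat.le_self_pow (by omega) p
  have hfixpow : ∀ (x : F) (ρ : ℕ), x ^ q = x → x ^ q ^ ρ = x := fun x ρ hx => fix_pow_q q ρ hx
  have hsub1 : ∀ x y : F, (x - y) ^ q = x ^ q - y ^ q := by
    intro x y
    have h := map_sub (iterateFrobenius F p k) x y
    simpa only [iterateFrobenius_def, ← hqpk] using h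
  -- lower bound on the fixed subfield
  have hK0 : q ≤ (Finset.univ.filter (fun x : F => x ^ q = x)).card := by
    obtain ⟨g, hg⟩ := IsCyclic.exists_generator (α := Fˣ)
    have hcardU : Fintype.card Fˣ = q ^ t - 1 := by rw [Fintype.card_units, hF]
    have horder : orderOf g = q ^ t - 1 := by
      rw [orderOf_eq_card_of_forall_mem_zpowers hg, Nat.card_eq_fintype_card, hcardU]
    have hqt2 : 2 ≤ q ^ t := by
      calc 2 ≤ q := hq2
        _ ≤ q ^ t := Nat.le_self_pow (show t ≠ 0 by omega) q
    have hdvd : q - 1 ∣ q ^ t - 1 := by simpa using Nat.sub_dvd_pow_sub_pow q 1 t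
    have horderh : orderOf (g ^ ((q ^ t - 1) / (q - 1))) = q - 1 := by
      rw [← horder]
      exact orderOf_pow_orderOf_div (by rw [horder]; omega) (by rw [horder]; exact hdvd)
    set h := g ^ ((q ^ t - 1) / (q - 1)) with hh
    have hmem : ∀ i : ℕ, ((h ^ i : Fˣ) : F) ^ q = ((h ^ i : Fˣ) : F) := by
      intro i
      have h1 : (h ^ i) ^ (q - 1) = 1 := by
        rw [← pow_mul, mul_comm, pow_mul, ← horderh, pow_orderOf_eq_one, one_pow]
      have h2 : ((h ^ i : Fˣ) : F) ^ (q - 1) = 1 := by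
        rw [← Units.val_pow_eq_pow_val, h1, Units.val_one]
      calc ((h ^ i : Fˣ) : F) ^ q
          = ((h ^ i : Fˣ) : F) ^ (q - 1) * ((h ^ i : Fˣ) : F) := by
            rw [← pow_succ]
            congr 1
            omega
        _ = ((h ^ i : Fˣ) : F) := by rw [h2, one_mul]
    have hinj2 : Set.InjOn (fun i : Fin (q - 1) => ((h ^ (i : ℕ) : Fˣ) : F))
        ↑(Finset.univ : Finset (Fin (q - 1))) := by
      intro x _ y _ hxy
      have h1 : (h ^ (x : ℕ) : Fˣ) = h ^ (y : ℕ) := Units.ext hxy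
      have h2 := pow_eq_pow_iff_modEq.mp h1
      rw [horderh] at h2
      have h3 : (x : ℕ) % (q - 1) = (y : ℕ) % (q - 1) := h2
      rw [Nat.mod_eq_of_lt x.isLt, Nat.mod_eq_of_lt y.isLt] at h3
      exact Fin.ext h3
    have hsubs : insert (0 : F)
        (Finset.image (fun i : Fin (q - 1) => ((h ^ (i : ℕ) : Fˣ) : F)) Finset.univ)
        ⊆ Finset.univ.filter (fun x : F => x ^ q = x) := by
      intro x hx
      simp only [Finset.mem_insert, Finset.mem_image, Finset.mem_univ, true_and] at hx
      simp only [Finset.mem_filter, Finset.mem_univ, true_and]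
      rcases hx with rfl | ⟨i, rfl⟩
      · rw [zero_pow (by omega : q ≠ 0)]
      · exact hmem i
    have hcards : (insert (0 : F)
        (Finset.image (fun i : Fin (q - 1) => ((h ^ (i : ℕ) : Fˣ) : F)) Finset.univ)).card
        = q := by
      rw [Finset.card_insert_of_notMem, Finset.card_image_of_injOn hinj2,
        Finset.card_univ, Fintype.card_fin]
      · omega
      · simp only [Finset.mem_image, Finset.mem_univ, true_and, not_exists]
        intro i hi
        exact Units.ne_zero _ hi
    calc q = _ := hcards.symm
      _ ≤ _ := Finset.card_le_card hsubs
  -- each kernel contains the span of the B i j's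
  have hlow : ∀ i : Fin r, q ^ (l i) ≤ (Finset.univ.filter (fun u : F =>
      ∑ ρ ∈ Finset.range n, c ρ * skewN q ρ (a i) * u ^ q ^ ρ = 0)).card := by
    intro i
    have hBroot : ∀ j : Fin (l i),
        ∑ ρ ∈ Finset.range n, c ρ * skewN q ρ (a i) * (B i j) ^ q ^ ρ = 0 := by
      intro j
      have h1 := hroots i j
      have h2 : ∑ ρ ∈ Finset.range n, c ρ * skewN q ρ (a i) * (B i j) ^ q ^ ρ
          = (∑ ρ ∈ Finset.range n, c ρ * skewN q ρ ((B i j) ^ (q - 1) * a i)) * B i j := by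
        rw [Finset.sum_mul]
        refine Finset.sum_congr rfl fun ρ _ => ?_
        rw [skewN_conj q (by omega) ρ]
        have h3 : (B i j) ^ (q ^ ρ - 1) * B i j = (B i j) ^ q ^ ρ := by
          rw [← pow_succ]
          congr 1
          have := Nat.one_le_pow ρ q (by omega : 0 < q)
          omega
        calc c ρ * skewN q ρ (a i) * B i j ^ q ^ ρ
            = c ρ * skewN q ρ (a i) * (B i j ^ (q ^ ρ - 1) * B i j) := by rw [h3]
          _ = c ρ * (B i j ^ (q ^ ρ - 1) * skewN q ρ (a i)) * B i j := by ring
      rw [h2, h1, zero_mul]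
    calc q ^ (l i)
        ≤ (Finset.univ.filter (fun x : F => x ^ q = x)).card ^ (l i) :=
          Nat.pow_le_pow_left hK0 _
      _ = (Fintype.piFinset (fun _ : Fin (l i) =>
            Finset.univ.filter (fun x : F => x ^ q = x))).card := by
          rw [Fintype.card_piFinset]
          rw [Finset.prod_const, Finset.card_univ, Fintype.card_fin]
      _ ≤ _ := by
          refine Finset.card_le_card_of_injOn (fun cv => ∑ j, cv j * B i j) ?_ ?_
          · intro cv hcv
            have hfix : ∀ j, (cv j) ^ q = cv j := by
              intro j
              have h4 := Fintype.mem_piFinset.mp hcv j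
              simpa using h4
            simp only [Finset.mem_coe, Finset.mem_filter, Finset.mem_univ, true_and]
            have h5 : ∀ ρ : ℕ, (∑ j, cv j * B i j) ^ q ^ ρ = ∑ j, cv j * (B i j) ^ q ^ ρ := by
              intro ρ
              rw [sum_pow_q p k q hqpk]
              refine Finset.sum_congr rfl fun j _ => ?_
              rw [mul_pow, hfixpow (cv j) ρ (hfix j)]
            calc ∑ ρ ∈ Finset.range n, c ρ * skewN q ρ (a i) * (∑ j, cv j * B i j) ^ q ^ ρ
                = ∑ ρ ∈ Finset.range n, ∑ j, cv j *
                    (c ρ * skewN q ρ (a i) * (B i j) ^ q ^ ρ) := by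
                  refine Finset.sum_congr rfl fun ρ _ => ?_
                  rw [h5, Finset.mul_sum]
                  refine Finset.sum_congr rfl fun j _ => by ring
              _ = ∑ j, cv j * ∑ ρ ∈ Finset.range n,
                    c ρ * skewN q ρ (a i) * (B i j) ^ q ^ ρ := by
                  rw [Finset.sum_comm]
                  exact Finset.sum_congr rfl fun j _ => (Finset.mul_sum _ _ _).symm
              _ = 0 := by
                  rw [Finset.sum_congr rfl fun j _ => by rw [hBroot j, mul_zero]]
                  exact Finset.sum_const_zero
          · intro cv hcv cw hcw hsum2
            have hfixv : ∀ j, (cv j) ^ q = cv j := by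
              intro j
              have h4 := Fintype.mem_piFinset.mp (Finset.mem_coe.mp hcv) j
              simpa using h4
            have hfixw : ∀ j, (cw j) ^ q = cw j := by
              intro j
              have h4 := Fintype.mem_piFinset.mp (Finset.mem_coe.mp hcw) j
              simpa using h4
            have hd : ∀ j, (cv j - cw j) ^ q = cv j - cw j := by
              intro j
              rw [hsub1 (cv j) (cw j), hfixv j, hfixw j]
            have hds : ∑ j, (cv j - cw j) * B i j = 0 := by
              have h7 : ∑ j, (cv j - cw j) * B i j
                  = (∑ j, cv j * B i j) - ∑ j, cw j * B i j := by
                rw [← Finset.sum_sub_distrib]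
                exact Finset.sum_congr rfl fun j _ => by ring
              have h8 : (∑ j, cv j * B i j) = ∑ j, cw j * B i j := hsum2
              rw [h7, h8, sub_self]
            have h9 := hindep i (fun j => cv j - cw j) hd hds
            funext j
            exact sub_eq_zero.mp (h9 j)
  have hkey := key p k q hp (by omega : 1 ≤ k) hqpk (n - 1) c hsupp hcne r a ha hconj
  simp only [show n - 1 + 1 = n from by omega] at hkey
  have hprod : q ^ (∑ i, l i) ≤ ∏ i, (Finset.univ.filter (fun u : F =>
      ∑ ρ ∈ Finset.range n, c ρ * skewN q ρ (a i) * u ^ q ^ ρ = 0)).card := by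
    calc q ^ (∑ i, l i) = ∏ i, q ^ (l i) := by rw [Finset.prod_pow_eq_pow_sum]
      _ ≤ _ := Finset.prod_le_prod' fun i _ => hlow i
  have hcontra : q ^ n ≤ q ^ (n - 1) := by
    by_cases hz : 1 ≤ zz
    · have hc00 : c 0 = 0 := hc0 hz
      rw [if_pos hc00] at hkey
      calc q ^ n = q ^ (∑ i, l i) * q := by
            rw [hcount, show zz = 1 by omega, pow_succ]
        _ ≤ (∏ i, (Finset.univ.filter (fun u : F =>
            ∑ ρ ∈ Finset.range n, c ρ * skewN q ρ (a i) * u ^ q ^ ρ = 0)).card) * q :=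
            Nat.mul_le_mul_right q hprod
        _ ≤ q ^ (n - 1) := hkey
    · calc q ^ n = q ^ (∑ i, l i) := by rw [hcount, show zz = 0 by omega, add_zero]
        _ ≤ ∏ i, (Finset.univ.filter (fun u : F =>
            ∑ ρ ∈ Finset.range n, c ρ * skewN q ρ (a i) * u ^ q ^ ρ = 0)).card := hprod
        _ ≤ (∏ i, (Finset.univ.filter (fun u : F =>
            ∑ ρ ∈ Finset.range n, c ρ * skewN q ρ (a i) * u ^ q ^ ρ = 0)).card)
            * (if c 0 = 0 then q else 1) :=
            Nat.le_mul_of_pos_right _ (by split <;> omega)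
        _ ≤ q ^ (n - 1) := hkey
  have hlt : q ^ (n - 1) < q ^ n := Nat.pow_lt_pow_right (by omega) (by omega)
  omega


/-- The skew Vandermonde criterion: with `Ω` consisting of the pairwise distinct conjugates
`ω_{i,j} = β_{i,j}^{q-1} a_i` of pairwise non-conjugate `a_1, …, a_r ∈ F*`, together
(optionally, when `z = true`) with the element `0`, the square skew Vandermonde matrix
`V_n(Ω)` (row `r` has entries `N_r(ω)`, `ω ∈ Ω`, rows ordered by any bijection `e`) is
invertible iff for each `i` the set `{β_{i,1}, …, β_{i,l_i}}` is `F_q`-linearly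
independent (membership of a scalar `c` in `F_q` being characterized by `c^q = c`). -/
theorem skew_vandermonde_invertible_iff (q t r : ℕ) (hq : IsPrimePow q) (ht : 1 ≤ t)
    (F : Type*) [Field F] [Fintype F] (hF : Fintype.card F = q ^ t)
    (a : Fin r → F) (ha : ∀ i, a i ≠ 0)
    (hconj : ∀ i j : Fin r, i ≠ j → ∀ β : F, β ≠ 0 → a j ≠ β ^ (q - 1) * a i)
    (l : Fin r → ℕ) (B : ∀ i : Fin r, Fin (l i) → F) (hB : ∀ i j, B i j ≠ 0)
    (hdist : ∀ i : Fin r, Function.Injective fun j : Fin (l i) => (B i j) ^ (q - 1) * a i)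
    (z : Bool)
    (e : ((Σ i : Fin r, Fin (l i)) ⊕ Fin (if z then 1 else 0)) ≃
         Fin (Fintype.card ((Σ i : Fin r, Fin (l i)) ⊕ Fin (if z then 1 else 0)))) :
    (Matrix.det (Matrix.of fun p c : (Σ i : Fin r, Fin (l i)) ⊕ Fin (if z then 1 else 0) =>
        skewN q ((e p : Fin _) : ℕ)
          (Sum.elim (fun s : Σ i : Fin r, Fin (l i) => (B s.1 s.2) ^ (q - 1) * a s.1)
            (fun _ => (0 : F)) c)) ≠ 0) ↔
      ∀ i : Fin r, ∀ c : Fin (l i) → F, (∀ j, (c j) ^ q = c j) →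
        ∑ j, c j * B i j = 0 → ∀ j, c j = 0 := by
  classical
  -- characteristic bookkeeping
  obtain ⟨p', k, hp', hk, hq'⟩ := hq
  have hp'n : p'.Prime := hp'.nat_prime
  have hq2 : 2 ≤ q := by
    rw [← hq']
    calc 2 ≤ p' := hp'n.two_le
    _ ≤ p' ^ k := Nat.le_self_pow (by omega) p'
  have hFcard2 : 2 ≤ Fintype.card F := by
    rw [hF]
    calc 2 ≤ q := hq2
    _ ≤ q ^ t := Nat.le_self_pow (by omega) q
  haveI : Nontrivial F := Fintype.one_lt_card_iff_nontrivial.mp (by omega)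
  set p := ringChar F with hpdef
  haveI hcharp : CharP F p := ringChar.charP F
  have hpprime : p.Prime := CharP.char_is_prime F p
  obtain ⟨n', hn'⟩ := FiniteField.card F p
  have hpp' : p' = p := by
    have h1 : p' ∣ p ^ (n' : ℕ) := by
      rw [← hn'.2, hF, ← hq', ← pow_mul]
      exact dvd_pow_self p' (by positivity)
    exact (Nat.prime_dvd_prime_iff_eq hp'n hpprime).mp (hp'n.dvd_of_dvd_pow h1)
  have hqpk : q = p ^ k := by rw [← hq', hpp']
  haveI : ExpChar F p := ExpChar.prime hpprime
  have hfixpow : ∀ (x : F) (ρ : ℕ), x ^ q = x → x ^ q ^ ρ = x := fun x ρ hx => fix_pow_q q ρ hx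
  constructor
  · -- nonzero determinant implies independence
    intro hdet i c hcfix hcsum j
    by_contra hcj
    apply hdet
    rw [← Matrix.exists_mulVec_eq_zero_iff]
    refine ⟨Sum.elim (fun s : Σ i' : Fin r, Fin (l i') =>
        ∑ j' : Fin (l i), if (⟨i, j'⟩ : Σ i' : Fin r, Fin (l i')) = s then c j' * B i j' else 0)
        (fun _ => 0), ?_, ?_⟩
    · intro h0
      have h1 := congrFun h0 (Sum.inl ⟨i, j⟩)
      simp only [Sum.elim_inl, Pi.zero_apply] at h1
      have h2 := Finset.sum_eq_single_of_mem
        (f := fun j' : Fin (l i) =>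
          if (⟨i, j'⟩ : Σ i' : Fin r, Fin (l i')) = (⟨i, j⟩ : Σ i' : Fin r, Fin (l i'))
          then c j' * B i j' else 0)
        (s := Finset.univ) j (Finset.mem_univ j)
        (fun j' _ hj' => by
          refine if_neg fun hcond => hj' ?_
          exact eq_of_heq (Sigma.mk.inj_iff.mp hcond).2)
      simp only [if_true] at h2
      rw [h2] at h1
      exact hcj ((mul_eq_zero.mp h1).resolve_right (hB i j))
    · funext pr
      have hcol : ∀ ρ : ℕ,
          ∑ j' : Fin (l i), skewN q ρ ((B i j') ^ (q - 1) * a i) * (c j' * B i j') = 0 := by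
        intro ρ
        have h1 : ∀ j' : Fin (l i), skewN q ρ ((B i j') ^ (q - 1) * a i) * (c j' * B i j')
            = skewN q ρ (a i) * (c j' * (B i j') ^ q ^ ρ) := by
          intro j'
          rw [skewN_conj q (by omega) ρ]
          have h2 : (B i j') ^ (q ^ ρ - 1) * (B i j') = (B i j') ^ q ^ ρ := by
            rw [← pow_succ]
            congr 1
            have := Nat.one_le_pow ρ q (by omega : 0 < q)
            omega
          calc (B i j') ^ (q ^ ρ - 1) * skewN q ρ (a i) * (c j' * B i j')
              = skewN q ρ (a i) * c j' * ((B i j') ^ (q ^ ρ - 1) * B i j') := by ring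
            _ = skewN q ρ (a i) * (c j' * (B i j') ^ q ^ ρ) := by rw [h2]; ring
        rw [Finset.sum_congr rfl fun j' _ => h1 j', ← Finset.mul_sum]
        have h3 : ∑ j', c j' * (B i j') ^ q ^ ρ = 0 := by
          have h4 : ∀ j' : Fin (l i), c j' * (B i j') ^ q ^ ρ = (c j' * B i j') ^ q ^ ρ := by
            intro j'
            rw [mul_pow, hfixpow (c j') ρ (hcfix j')]
          rw [Finset.sum_congr rfl fun j' _ => h4 j', ← sum_pow_q p k q hqpk, hcsum,
            zero_pow (by positivity : q ^ ρ ≠ 0)]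
        rw [h3, mul_zero]
      simp only [Matrix.mulVec, dotProduct, Pi.zero_apply]
      rw [Fintype.sum_sum_type]
      simp only [Sum.elim_inr, mul_zero, Finset.sum_const_zero, add_zero, Sum.elim_inl,
        Matrix.of_apply]
      simp_rw [Finset.mul_sum]
      rw [Finset.sum_comm]
      simp_rw [mul_ite, mul_zero, Finset.sum_ite_eq, Finset.mem_univ, if_true]
      exact hcol _
  · intro hindep hdet0
    obtain ⟨v, hv0, hveq⟩ := Matrix.exists_vecMul_eq_zero_iff.mpr hdet0
    obtain ⟨p₀, hp₀⟩ := Function.ne_iff.mp hv0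
    have hn1 : 1 ≤ Fintype.card ((Σ i : Fin r, Fin (l i)) ⊕ Fin (if z = true then 1 else 0)) :=
      Fintype.card_pos_iff.mpr ⟨p₀⟩
    set c : ℕ → F := fun ρ =>
      if h : ρ < Fintype.card ((Σ i : Fin r, Fin (l i)) ⊕ Fin (if z = true then 1 else 0))
      then v (e.symm ⟨ρ, h⟩) else 0 with hc
    have hcval : ∀ ρ : Fin (Fintype.card
        ((Σ i : Fin r, Fin (l i)) ⊕ Fin (if z = true then 1 else 0))),
        c (ρ : ℕ) = v (e.symm ρ) := by
      intro ρ
      rw [hc]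
      simp only
      rw [dif_pos ρ.isLt]
    have hcol : ∀ col : (Σ i : Fin r, Fin (l i)) ⊕ Fin (if z = true then 1 else 0),
        ∑ ρ ∈ Finset.range (Fintype.card
          ((Σ i : Fin r, Fin (l i)) ⊕ Fin (if z = true then 1 else 0))),
          c ρ * skewN q ρ (Sum.elim (fun s : Σ i : Fin r, Fin (l i) =>
            (B s.1 s.2) ^ (q - 1) * a s.1) (fun _ => (0 : F)) col) = 0 := by
      intro col
      have h1 := congrFun hveq col
      simp only [Matrix.vecMul, dotProduct, Matrix.of_apply, Pi.zero_apply] at h1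
      calc ∑ ρ ∈ Finset.range (Fintype.card
            ((Σ i : Fin r, Fin (l i)) ⊕ Fin (if z = true then 1 else 0))),
            c ρ * skewN q ρ (Sum.elim (fun s : Σ i : Fin r, Fin (l i) =>
              (B s.1 s.2) ^ (q - 1) * a s.1) (fun _ => (0 : F)) col)
          = ∑ ρ : Fin (Fintype.card
            ((Σ i : Fin r, Fin (l i)) ⊕ Fin (if z = true then 1 else 0))),
            c (ρ : ℕ) * skewN q (ρ : ℕ) (Sum.elim (fun s : Σ i : Fin r, Fin (l i) =>
              (B s.1 s.2) ^ (q - 1) * a s.1) (fun _ => (0 : F)) col) :=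
            (Fin.sum_univ_eq_sum_range _ _).symm
        _ = ∑ pp, v pp * skewN q ((e pp : Fin _) : ℕ)
            (Sum.elim (fun s : Σ i : Fin r, Fin (l i) =>
              (B s.1 s.2) ^ (q - 1) * a s.1) (fun _ => (0 : F)) col) := by
            refine (Fintype.sum_equiv e _ _ ?_).symm
            intro pp
            rw [hcval (e pp), Equiv.symm_apply_apply]
        _ = 0 := h1
    have hcne : ∃ ρ, c ρ ≠ 0 := by
      refine ⟨((e p₀ : Fin _) : ℕ), ?_⟩
      have h2 := hcval (e p₀)
      rw [Equiv.symm_apply_apply] at h2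
      rw [h2]
      exact hp₀
    have hsupp : ∀ ρ, Fintype.card
        ((Σ i : Fin r, Fin (l i)) ⊕ Fin (if z = true then 1 else 0)) - 1 < ρ → c ρ = 0 := by
      intro ρ hρ
      rw [hc]
      simp only
      rw [dif_neg (by omega)]
    have hc0 : 1 ≤ (if z = true then 1 else 0) → c 0 = 0 := by
      intro hz1
      have hz : z = true := by
        by_contra hzf
        simp [hzf] at hz1
      have hcolr := hcol (Sum.inr ⟨0, by simp [hz]⟩)
      simp only [Sum.elim_inr] at hcolr
      rw [Finset.sum_eq_single_of_mem 0 (Finset.mem_range.mpr (by omega))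
        (fun ρ _ hρ0 => by rw [skewN_zero_arg q ρ hρ0, mul_zero])] at hcolr
      simpa [skewN_zero] using hcolr
    exact keyB p k q t hpprime (by omega) hqpk hF ht r a ha hconj l B hindep
      (Fintype.card ((Σ i : Fin r, Fin (l i)) ⊕ Fin (if z = true then 1 else 0)))
      hn1 (if z = true then 1 else 0) (by split <;> omega)
      (by rw [Fintype.card_sum, Fintype.card_sigma]; simp)
      c hcne hsupp hc0
      (fun i j => by simpa only [Sum.elim_inl] using hcol (Sum.inl ⟨i, j⟩))
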